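/- For every a > 0 and A > 0, the standing wave u_n(t) = A e^{it} exp(−a|n|) is an exact solution of the discrete nonlinear Schrödinger lattice equation i·(du_n/dt) = −∑_{m∈ℤ} exp(−a|n−m|) u_m + (2/(e^{2a}−1) − (1/(2a)) ln(|u_n|²/A²)) u_n for all t ∈ ℝ and n ∈ ℤ. -/

import Mathlib

private lemma keyNatDNLS (a : ℝ) (ha : 0 < a) (N : ℕ) :
    HasSum (fun m : ℤ => Real.exp (-a * |((N : ℤ) : ℝ) - (m : ℝ)|) * Real.exp (-a * |(m : ℝ)|))
      (Real.exp (-a * (N : ℝ)) * ((N : ℝ) + 1 + 2 / (Real.exp (2 * a) - 1))) := by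
  set f : ℤ → ℝ := fun m => Real.exp (-a * |((N : ℤ) : ℝ) - (m : ℝ)|) * Real.exp (-a * |(m : ℝ)|)
    with hf
  set r : ℝ := Real.exp (-(2 * a)) with hr
  set c : ℝ := Real.exp (-a * ((N : ℝ) + 2)) with hc
  have hr1 : r < 1 := Real.exp_lt_one_iff.mpr (by linarith)
  have hr0 : 0 ≤ r := (Real.exp_pos _).le
  have hE : (1 : ℝ) < Real.exp (2 * a) := by
    rw [← Real.exp_zero]; exact Real.exp_lt_exp.mpr (by linarith)
  have hEne : Real.exp (2 * a) - 1 ≠ 0 := by linarith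
  have hgeo : HasSum (fun k : ℕ => c * r ^ k) (c * (1 - r)⁻¹) :=
    (hasSum_geometric_of_lt_one hr0 hr1).mul_left c
  set T : ℝ := Real.exp (-a * (N : ℝ)) / (Real.exp (2 * a) - 1) with hT
  have hcT : c * (1 - r)⁻¹ = T := by
    have h1r : 1 - r ≠ 0 := by linarith
    rw [hT, hc, hr]
    field_simp
    have e1 : Real.exp (-(a * ((N : ℝ) + 2))) = Real.exp (-(a * N)) * Real.exp (-(a * 2)) := by
      rw [← Real.exp_add]; ring_nf
    have e2 : Real.exp (a * 2) * Real.exp (-(a * 2)) = 1 := by rw [← Real.exp_add]; simp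
    have hne1 : 1 - Real.exp (-(a * 2)) ≠ 0 := by rw [show a * 2 = 2 * a by ring]; exact h1r
    have hne2 : Real.exp (a * 2) - 1 ≠ 0 := by rw [show a * 2 = 2 * a by ring]; exact hEne
    rw [e1, div_eq_div_iff hne1 hne2]
    linear_combination Real.exp (-(a * N)) * e2
  have hgeoT : HasSum (fun k : ℕ => c * r ^ k) T := hcT ▸ hgeo
  -- negative part
  have hneg : HasSum (fun k : ℕ => f (-((k : ℤ) + 1))) T := by
    have hfun : (fun k : ℕ => f (-((k : ℤ) + 1))) = fun k : ℕ => c * r ^ k := by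
      funext k
      have h1 : |((N : ℤ) : ℝ) - ((-((k : ℤ) + 1) : ℤ) : ℝ)| = (N : ℝ) + (k : ℝ) + 1 := by
        push_cast
        rw [show ((N : ℝ)) - -((k : ℝ) + 1) = (N : ℝ) + (k : ℝ) + 1 by ring,
          abs_of_nonneg (by positivity)]
      have h2 : |((-((k : ℤ) + 1) : ℤ) : ℝ)| = (k : ℝ) + 1 := by
        push_cast
        rw [abs_neg, abs_of_nonneg (by positivity)]
      rw [hf]
      simp only [h1, h2, hc, hr, ← Real.exp_nat_mul, ← Real.exp_add]
      congr 1; ring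
    rw [hfun]; exact hgeoT
  -- nonneg part
  have hpos : HasSum (fun k : ℕ => f (k : ℤ)) (T + ((N : ℝ) + 1) * Real.exp (-a * (N : ℝ))) := by
    have htail : HasSum (fun k : ℕ => f ((k + (N + 1) : ℕ) : ℤ)) T := by
      have hfun : (fun k : ℕ => f ((k + (N + 1) : ℕ) : ℤ)) = fun k : ℕ => c * r ^ k := by
        funext k
        have h1 : |((N : ℤ) : ℝ) - (((k + (N + 1) : ℕ) : ℤ) : ℝ)| = (k : ℝ) + 1 := by
          push_cast
          rw [show ((N : ℝ)) - ((k : ℝ) + ((N : ℝ) + 1)) = -((k : ℝ) + 1) by ring, abs_neg,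
            abs_of_nonneg (by positivity)]
        have h2 : |(((k + (N + 1) : ℕ) : ℤ) : ℝ)| = (k : ℝ) + (N : ℝ) + 1 := by
          push_cast
          rw [abs_of_nonneg (by positivity)]
          ring
        rw [hf]
        simp only [h1, h2, hc, hr, ← Real.exp_nat_mul, ← Real.exp_add]
        congr 1; ring
      rw [hfun]; exact hgeoT
    have hstep := (hasSum_nat_add_iff (f := fun k : ℕ => f (k : ℤ)) (N + 1)).mp htail
    have hterm : ∀ i ∈ Finset.range (N + 1), f (i : ℤ) = Real.exp (-a * (N : ℝ)) := by
      intro i hi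
      have hiN : (i : ℝ) ≤ (N : ℝ) := by
        exact_mod_cast Nat.lt_succ_iff.mp (Finset.mem_range.mp hi)
      have h1 : |((N : ℤ) : ℝ) - ((i : ℤ) : ℝ)| = (N : ℝ) - (i : ℝ) := by
        push_cast; rw [abs_of_nonneg (by linarith)]
      have h2 : |((i : ℤ) : ℝ)| = (i : ℝ) := by push_cast; rw [abs_of_nonneg (by positivity)]
      rw [hf]
      simp only [h1, h2, ← Real.exp_add]
      congr 1; ring
    rw [Finset.sum_congr rfl hterm, Finset.sum_const, Finset.card_range, nsmul_eq_mul] at hstep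
    convert hstep using 1
    · rfl
    push_cast
    ring
  have htot := hpos.of_nat_of_neg_add_one hneg
  convert htot using 1
  rw [hT]
  field_simp
  ring

private lemma keyIntDNLS (a : ℝ) (ha : 0 < a) (n : ℤ) :
    HasSum (fun m : ℤ => Real.exp (-a * |(n : ℝ) - (m : ℝ)|) * Real.exp (-a * |(m : ℝ)|))
      (Real.exp (-a * |(n : ℝ)|) * (|(n : ℝ)| + 1 + 2 / (Real.exp (2 * a) - 1))) := by
  rcases le_or_gt 0 n with hn | hn
  · obtain ⟨N, rfl⟩ := Int.eq_ofNat_of_zero_le hn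
    have habs : |((N : ℤ) : ℝ)| = (N : ℝ) := by push_cast; exact abs_of_nonneg (by positivity)
    rw [habs]
    exact keyNatDNLS a ha N
  · obtain ⟨N, hN⟩ := Int.eq_ofNat_of_zero_le (by omega : (0 : ℤ) ≤ -n)
    set g : ℤ → ℝ :=
      fun m => Real.exp (-a * |(n : ℝ) - (m : ℝ)|) * Real.exp (-a * |(m : ℝ)|) with hg
    have hcomp : (g ∘ (Equiv.neg ℤ)) =
        fun m : ℤ => Real.exp (-a * |((N : ℤ) : ℝ) - (m : ℝ)|) * Real.exp (-a * |(m : ℝ)|) := by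
      funext m
      simp only [hg, Function.comp_apply, Equiv.neg_apply]
      have h1 : |(n : ℝ) - ((-m : ℤ) : ℝ)| = |((N : ℤ) : ℝ) - (m : ℝ)| := by
        have : (n : ℝ) = -((N : ℤ) : ℝ) := by
          rw [← hN]; push_cast; ring
        rw [this]; push_cast
        rw [show -(N : ℝ) - -(m : ℝ) = -((N : ℝ) - m) by ring, abs_neg]
      have h2 : |((-m : ℤ) : ℝ)| = |(m : ℝ)| := by push_cast; rw [abs_neg]
      rw [h1, h2]
    have habs : |(n : ℝ)| = (N : ℝ) := by
      have : (n : ℝ) = -((N : ℤ) : ℝ) := by rw [← hN]; push_cast; ring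
      rw [this, abs_neg]; push_cast; exact abs_of_nonneg (by positivity)
    rw [habs]
    rw [← (Equiv.neg ℤ).hasSum_iff]
    rw [show (g ∘ ⇑(Equiv.neg ℤ)) = _ from hcomp]
    exact keyNatDNLS a ha N

/-- For every `a > 0` and `A > 0`, the standing wave
`u_n(t) = A e^{it} exp (-a|n|)` is an exact solution of the discrete nonlinear
Schrödinger lattice equation
`i u̇_n = -∑_{m∈ℤ} exp (-a|n-m|) u_m + (2/(e^{2a}-1) - (1/(2a)) ln (|u_n|²/A²)) u_n`. -/
theorem peakon_standing_wave_solves_DNLS (a A : ℝ) (ha : 0 < a) (hA : 0 < A)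
    (u : ℤ → ℝ → ℂ)
    (hu : ∀ (n : ℤ) (t : ℝ),
      u n t = (A : ℂ) * Complex.exp (Complex.I * t) * (Real.exp (-a * |(n : ℝ)|) : ℝ)) :
    ∀ (n : ℤ) (t : ℝ),
      Complex.I * deriv (fun s => u n s) t
        = -(∑' m : ℤ, (Real.exp (-a * |(n : ℝ) - (m : ℝ)|) : ℝ) * u m t)
          + ((2 / (Real.exp (2 * a) - 1)
              - (1 / (2 * a)) * Real.log (‖u n t‖ ^ 2 / A ^ 2) : ℝ) : ℂ)
            * u n t := by
  intro n t
  have hE : (1 : ℝ) < Real.exp (2 * a) := by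
    rw [← Real.exp_zero]; exact Real.exp_lt_exp.mpr (by linarith)
  have hEne : Real.exp (2 * a) - 1 ≠ 0 := by linarith
  -- derivative
  have hderiv : deriv (fun s => u n s) t
      = (A : ℂ) * (Complex.exp (Complex.I * t) * (Complex.I * 1))
        * ((Real.exp (-a * |(n : ℝ)|) : ℝ) : ℂ) := by
    have hfun : (fun s : ℝ => u n s)
        = fun s : ℝ => (A : ℂ) * Complex.exp (Complex.I * s)
            * ((Real.exp (-a * |(n : ℝ)|) : ℝ) : ℂ) := funext fun s => hu n s
    rw [hfun]
    have h1 : HasDerivAt (fun s : ℝ => (s : ℂ)) 1 t := by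
      simpa using (hasDerivAt_id t).ofReal_comp
    have h2 : HasDerivAt (fun s : ℝ => Complex.I * (s : ℂ)) (Complex.I * 1) t :=
      h1.const_mul Complex.I
    have h3 := h2.cexp
    exact ((h3.const_mul ((A : ℂ))).mul_const _).deriv
  -- the lattice sum
  have hkey := keyIntDNLS a ha n
  have hkeyC : HasSum
      (fun m : ℤ => ((Real.exp (-a * |(n : ℝ) - (m : ℝ)|) * Real.exp (-a * |(m : ℝ)|) : ℝ) : ℂ))
      ((Real.exp (-a * |(n : ℝ)|) * (|(n : ℝ)| + 1 + 2 / (Real.exp (2 * a) - 1)) : ℝ) : ℂ) :=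
    Complex.hasSum_ofReal.mpr hkey
  have hsum : HasSum
      (fun m : ℤ => ((Real.exp (-a * |(n : ℝ) - (m : ℝ)|) : ℝ) : ℂ) * u m t)
      (((Real.exp (-a * |(n : ℝ)|) * (|(n : ℝ)| + 1 + 2 / (Real.exp (2 * a) - 1)) : ℝ) : ℂ)
        * ((A : ℂ) * Complex.exp (Complex.I * t))) := by
    have h := hkeyC.mul_right ((A : ℂ) * Complex.exp (Complex.I * t))
    have hfe : (fun m : ℤ => ((Real.exp (-a * |(n : ℝ) - (m : ℝ)|) : ℝ) : ℂ) * u m t)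
        = fun m : ℤ =>
          ((Real.exp (-a * |(n : ℝ) - (m : ℝ)|) * Real.exp (-a * |(m : ℝ)|) : ℝ) : ℂ)
            * ((A : ℂ) * Complex.exp (Complex.I * t)) := by
      funext m
      rw [hu m t]
      push_cast
      ring
    rw [hfe]
    exact h
  -- the logarithm term
  have habs : ‖u n t‖ = A * Real.exp (-a * |(n : ℝ)|) := by
    rw [hu n t]
    simp [map_mul, Complex.norm_exp, Complex.norm_real, abs_of_pos hA,
      abs_of_pos (Real.exp_pos _), Complex.mul_re]
  have hlog : Real.log (‖u n t‖ ^ 2 / A ^ 2) = -(2 * a * |(n : ℝ)|) := by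
    rw [habs]
    have hAne : A ≠ 0 := ne_of_gt hA
    have h1 : (A * Real.exp (-a * |(n : ℝ)|)) ^ 2 / A ^ 2 = Real.exp (-a * |(n : ℝ)|) ^ 2 := by
      field_simp
    rw [h1, Real.log_pow, Real.log_exp]
    push_cast
    ring
  have hcoef : (2 / (Real.exp (2 * a) - 1)
      - (1 / (2 * a)) * Real.log (‖u n t‖ ^ 2 / A ^ 2))
      = 2 / (Real.exp (2 * a) - 1) + |(n : ℝ)| := by
    rw [hlog]
    have h2a : (2 * a) ≠ 0 := by positivity
    field_simp
    ring
  rw [hderiv, hsum.tsum_eq, hcoef, hu n t]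
  push_cast [Complex.ofReal_exp]
  linear_combination ((A : ℂ) * Complex.exp (Complex.I * t)
    * Complex.exp (-(a : ℂ) * ((|(n : ℝ)| : ℝ) : ℂ))) * Complex.I_mul_I
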